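/- Let μ be a finite Borel measure on ℝ^n, let Ω_1,…,Ω_p be Borel subsets of ℝ^n, and let h : ℝ^n → ℝ be a Borel measurable μ-integrable function. Suppose ∫_{⋂_{j∈S} Ω_j} h dμ = 0 for every nonempty subset S ⊆ {1,…,p}. Then for every i = 1,…,p, ∫_{Ω_i} h(x)/N(x) dμ(x) = 0, where N(x) := |{j ∈ {1,…,p} : x ∈ Ω_j}|. -/

import Mathlib

open MeasureTheory

/-- The number of sets `Ω_j` containing `x`. -/
noncomputable def Ncount {n p : ℕ} (Ω : Fin p → Set (Fin n → ℝ)) (x : Fin n → ℝ) : ℕ :=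
  Nat.card {j : Fin p // x ∈ Ω j}

/-- If `∫_{⋂_{j∈S} Ω_j} h dμ = 0` for every nonempty `S ⊆ {1,…,p}`, then
`∫_{Ω_i} h(x)/N(x) dμ(x) = 0` for every `i`, where `N(x) = |{j : x ∈ Ω_j}|`. -/
theorem stmt10 {n p : ℕ} (μ : Measure (Fin n → ℝ)) [IsFiniteMeasure μ]
    (Ω : Fin p → Set (Fin n → ℝ)) (hΩ : ∀ i, MeasurableSet (Ω i))
    (h : (Fin n → ℝ) → ℝ) (hm : Measurable h) (hi : Integrable h μ)
    (hS : ∀ S : Finset (Fin p), S.Nonempty → ∫ x in ⋂ j ∈ S, Ω j, h x ∂μ = 0)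
    (i : Fin p) :
    ∫ x in Ω i, h x / (Ncount Ω x : ℝ) ∂μ = 0 := by
  classical
  -- the "atom" determined by a set of indices
  set A : Finset (Fin p) → Set (Fin n → ℝ) :=
    fun T => {x | ∀ j, x ∈ Ω j ↔ j ∈ T} with hAdef
  have hA : ∀ T, MeasurableSet (A T) := by
    intro T
    have : A T = ⋂ j, (if j ∈ T then Ω j else (Ω j)ᶜ) := by
      ext x
      simp only [hAdef, Set.mem_setOf_eq, Set.mem_iInter]
      constructor
      · intro hx j
        by_cases hj : j ∈ T <;> simp [hj, hx j]
      · intro hx j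
        have := hx j
        by_cases hj : j ∈ T <;> simp [hj] at this <;> simp [hj, this]
    rw [this]
    exact MeasurableSet.iInter fun j => by
      split <;> [exact hΩ j; exact (hΩ j).compl]
  have hdisj : Pairwise (Function.onFun Disjoint A) := by
    intro T T' hne
    rw [Function.onFun, Set.disjoint_left]
    intro x hx hx'
    exact hne (Finset.ext fun j => ((hx j).symm.trans (hx' j)))
  -- decomposition of intersections into atoms
  have hUnion : ∀ T : Finset (Fin p),
      (⋂ j ∈ T, Ω j) =
        ⋃ S ∈ Finset.univ.powerset.filter (fun S => T ⊆ S), A S := by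
    intro T
    ext x
    simp only [Set.mem_iInter, Set.mem_iUnion, Finset.mem_filter,
      Finset.mem_powerset, Finset.subset_univ, true_and]
    constructor
    · intro hx
      refine ⟨Finset.univ.filter (fun j => x ∈ Ω j), fun j hj => ?_, fun j => ?_⟩
      · simp [hx j hj]
      · simp
    · rintro ⟨S, hTS, hxS⟩ j hj
      exact (hxS j).2 (hTS hj)
  -- integrals over atoms vanish
  have key : ∀ k : ℕ, ∀ T : Finset (Fin p), p - T.card ≤ k → T.Nonempty →
      ∫ x in A T, h x ∂μ = 0 := by
    intro k
    induction k with
    | zero =>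
      intro T hT hTne
      have hcard : T.card = p := le_antisymm (by simpa using T.card_le_univ)
        (by omega)
      have hTuniv : T = Finset.univ := Finset.eq_univ_of_card T (by simp [hcard])
      have : A T = ⋂ j ∈ T, Ω j := by
        ext x
        simp [hAdef, hTuniv, Set.mem_iInter]
      rw [this]
      exact hS T hTne
    | succ k ih =>
      intro T hT hTne
      set F := Finset.univ.powerset.filter (fun S => T ⊆ S) with hF
      have hTF : T ∈ F := by simp [hF]
      have hsum : ∑ S ∈ F, ∫ x in A S, h x ∂μ = 0 := by
        rw [← integral_biUnion_finset F (fun S _ => hA S)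
          (hdisj.set_pairwise _) (fun S _ => hi.integrableOn), ← hUnion]
        exact hS T hTne
      rw [← Finset.add_sum_erase _ _ hTF] at hsum
      have hrest : ∀ S ∈ F.erase T, ∫ x in A S, h x ∂μ = 0 := by
        intro S hSe
        rw [Finset.mem_erase, hF, Finset.mem_filter] at hSe
        obtain ⟨hne, _, hTS⟩ := hSe
        have hlt : T.card < S.card :=
          Finset.card_lt_card (lt_of_le_of_ne hTS (by exact fun e => hne e.symm))
        exact ih S (by omega) (hTne.mono hTS)
      rw [Finset.sum_eq_zero hrest, add_zero] at hsum
      exact hsum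
  -- decompose Ω i
  have hOmega : Ω i = ⋃ S ∈ Finset.univ.powerset.filter (fun S => i ∈ S), A S := by
    have := hUnion {i}
    simpa [Finset.singleton_subset_iff] using this
  -- Ncount on an atom
  have hN : ∀ S : Finset (Fin p), ∀ x ∈ A S, Ncount Ω x = S.card := by
    intro S x hx
    have : Nat.card {j : Fin p // x ∈ Ω j} = Nat.card {j : Fin p // j ∈ S} :=
      Nat.card_congr (Equiv.subtypeEquivRight fun j => hx j)
    rw [Ncount, this, Nat.card_eq_finsetCard]
  have hio : ∀ S : Finset (Fin p),
      IntegrableOn (fun x => h x / (Ncount Ω x : ℝ)) (A S) μ := by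
    intro S
    refine IntegrableOn.congr_fun (hi.integrableOn.div_const (S.card : ℝ))
      (fun x hx => ?_) (hA S)
    simp [hN S x hx]
  rw [hOmega, integral_biUnion_finset _ (fun S _ => hA S)
    (hdisj.set_pairwise _) (fun S _ => hio S)]
  refine Finset.sum_eq_zero fun S hSmem => ?_
  rw [Finset.mem_filter] at hSmem
  have hcongr : ∫ x in A S, h x / (Ncount Ω x : ℝ) ∂μ
      = ∫ x in A S, h x / (S.card : ℝ) ∂μ :=
    setIntegral_congr_fun (hA S) (fun x hx => by rw [hN S x hx])
  rw [hcongr, integral_div, key (p - S.card) S le_rfl ⟨i, hSmem.2⟩, zero_div]
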